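/- Let G be a bipartite graph on parts [m] and [n] with m ≤ n, and let S_G ≤ M(m×n, F) be the span of elementary matrices E_{i,j} over edges (i,j) of G. Then for each r ∈ [m], the matching number of G is at most r if and only if every matrix in S_G has rank at most r. -/

import Mathlib

open Matrix

-- A square matrix with linearly independent rows has nonzero determinant.
lemma det_ne_zero_of_li_rows {F : Type*} [Field F] {k : ℕ} (D : Matrix (Fin k) (Fin k) F)
    (h : LinearIndependent F (fun i => D i)) : D.det ≠ 0 := by
  intro hdet
  obtain ⟨v, hv, hv0⟩ := Matrix.exists_vecMul_eq_zero_iff.mpr hdet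
  apply hv
  have := Fintype.linearIndependent_iff.mp h v ?_
  · exact funext this
  · funext j
    simpa [Matrix.vecMul, dotProduct, Finset.sum_apply] using congrFun hv0 j

-- extract linearly independent columns
lemma exists_li_cols {F : Type*} [Field F] {m n k : ℕ} (A : Matrix (Fin m) (Fin n) F)
    (h : A.rank = k) : ∃ g : Fin k → Fin n, LinearIndependent F (fun i => Aᵀ (g i)) := by
  classical
  obtain ⟨s, hsub, hspan, hli⟩ := exists_linearIndependent F (Set.range Aᵀ)
  have hfin : s.Finite := by
    have : Set.Finite (Set.range Aᵀ) := Set.finite_range _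
    exact this.subset hsub
  haveI : Fintype s := hfin.fintype
  have hcard : s.toFinset.card = k := by
    rw [← finrank_span_set_eq_card hli, hspan]
    exact (Matrix.rank_eq_finrank_span_cols A).symm.trans h
  have hk : Fintype.card s = k := by rwa [Set.toFinset_card] at hcard
  let e : Fin k ≃ s := (Fintype.equivFinOfCardEq hk).symm
  have hchoice : ∀ x : s, ∃ j, Aᵀ j = (x : Fin m → F) := fun x => hsub x.2
  choose g hg using hchoice
  refine ⟨fun i => g (e i), ?_⟩
  have : (fun i => Aᵀ (g (e i))) = (fun x : s => (x : Fin m → F)) ∘ e := by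
    funext i; simp [hg]
  rw [this]
  exact hli.comp e e.injective

-- rank = k gives an invertible k×k submatrix
lemma exists_submatrix_det_ne_zero {F : Type*} [Field F] {m n k : ℕ}
    (A : Matrix (Fin m) (Fin n) F) (h : A.rank = k) :
    ∃ (f : Fin k → Fin m) (g : Fin k → Fin n), Function.Injective f ∧ Function.Injective g ∧
      (A.submatrix f g).det ≠ 0 := by
  obtain ⟨g, hg⟩ := exists_li_cols A h
  have hginj : Function.Injective g := fun i i' hii => hg.injective (by simp [hii])
  set C : Matrix (Fin m) (Fin k) F := A.submatrix id g with hC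
  have hCT : ∀ i, Cᵀ i = Aᵀ (g i) := fun i => rfl
  have hCrank : C.rank = k := by
    rw [Matrix.rank_eq_finrank_span_cols]
    have : Set.range Cᵀ = Set.range (fun i => Aᵀ (g i)) := by
      congr 1
    rw [show Set.range C.col = Set.range Cᵀ from rfl, this, finrank_span_eq_card hg, Fintype.card_fin]
  have hCTrank : Cᵀ.rank = k := by rw [Matrix.rank_transpose, hCrank]
  obtain ⟨f, hf⟩ := exists_li_cols Cᵀ hCTrank
  have hfinj : Function.Injective f := fun i i' hii => hf.injective (by simp [hii])
  refine ⟨f, g, hfinj, hginj, ?_⟩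
  apply det_ne_zero_of_li_rows
  have : (fun i => A.submatrix f g i) = (fun i => Cᵀᵀ (f i)) := by
    funext i; funext j; rfl
  rw [this]
  exact hf


/-- The graphical matrix space of a bipartite graph with edge set `E ⊆ [m] × [n]`:
the span of the elementary matrices over the edges. -/
def graphSpace (F : Type*) [Field F] {m n : ℕ} (E : Finset (Fin m × Fin n)) :
    Submodule F (Matrix (Fin m) (Fin n) F) :=
  Submodule.span F ((fun e => Matrix.single e.1 e.2 (1 : F)) '' (E : Set (Fin m × Fin n)))

/-- A set of edges is a matching if no two distinct edges share a vertex. -/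
def IsMatching {m n : ℕ} (M : Finset (Fin m × Fin n)) : Prop :=
  ∀ e ∈ M, ∀ f ∈ M, e ≠ f → e.1 ≠ f.1 ∧ e.2 ≠ f.2

-- support of a matrix in graphSpace is contained in E
lemma support_subset {F : Type*} [Field F] {m n : ℕ} {E : Finset (Fin m × Fin n)}
    {B : Matrix (Fin m) (Fin n) F} (hB : B ∈ graphSpace F E) :
    ∀ i j, (i, j) ∉ E → B i j = 0 := by
  intro i j hij
  induction hB using Submodule.span_induction with
  | mem x hx =>
      obtain ⟨e, he, rfl⟩ := hx
      apply Matrix.single_apply_of_ne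
      rintro ⟨rfl, rfl⟩
      exact hij he
  | zero => simp
  | add x y _ _ hx hy => simp [Matrix.add_apply, hx, hy]
  | smul c x _ hx => simp [Matrix.smul_apply, hx]

theorem stmt_0 (F : Type*) [Field F] (m n : ℕ) (hmn : m ≤ n)
    (E : Finset (Fin m × Fin n)) (r : ℕ) (hr1 : 1 ≤ r) (hrm : r ≤ m) :
    (∀ M ⊆ E, IsMatching M → M.card ≤ r) ↔
      (∀ B ∈ graphSpace F E, B.rank ≤ r) := by
  classical
  constructor
  · -- small matchings → small ranks
    intro hM B hB
    by_contra hrank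
    push_neg at hrank
    set k := B.rank with hk
    obtain ⟨f, g, hf, hg, hdet⟩ := exists_submatrix_det_ne_zero B hk.symm
    -- find a permutation with all entries nonzero
    have hperm : ∃ σ : Equiv.Perm (Fin k), ∀ i, B (f (σ i)) (g i) ≠ 0 := by
      by_contra hc
      push_neg at hc
      apply hdet
      rw [Matrix.det_apply]
      apply Finset.sum_eq_zero
      intro σ _
      obtain ⟨i, hi⟩ := hc σ
      rw [Finset.prod_eq_zero (Finset.mem_univ i) (by simpa using hi)]
      simp
    obtain ⟨σ, hσ⟩ := hperm
    set M : Finset (Fin m × Fin n) := Finset.image (fun i => (f (σ i), g i)) Finset.univ with hMdef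
    have hMsub : M ⊆ E := by
      intro e he
      rw [hMdef, Finset.mem_image] at he
      obtain ⟨i, _, rfl⟩ := he
      by_contra hne
      exact hσ i (support_subset hB _ _ hne)
    have hMmatch : IsMatching M := by
      intro e he f' hf' hne
      rw [hMdef, Finset.mem_image] at he hf'
      obtain ⟨i, _, rfl⟩ := he
      obtain ⟨i', _, rfl⟩ := hf'
      have hii' : i ≠ i' := by rintro rfl; exact hne rfl
      exact ⟨fun h => hii' (σ.injective (hf h)), fun h => hii' (hg h)⟩
    have hMcard : M.card = k := by
      rw [hMdef, Finset.card_image_of_injective _ (fun i i' h => hg (congrArg Prod.snd h)),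
        Finset.card_univ, Fintype.card_fin]
    have := hM M hMsub hMmatch
    omega
  · -- small ranks → small matchings
    intro hB M hME hMm
    set B : Matrix (Fin m) (Fin n) F := ∑ e ∈ M, Matrix.single e.1 e.2 (1 : F) with hBdef
    have hBmem : B ∈ graphSpace F E := by
      apply Submodule.sum_mem
      intro e he
      exact Submodule.subset_span ⟨e, hME he, rfl⟩
    have hBij : ∀ i j, B i j = if (i, j) ∈ M then (1 : F) else 0 := by
      intro i j
      rw [hBdef, Matrix.sum_apply]
      by_cases h : (i, j) ∈ M
      · rw [Finset.sum_eq_single_of_mem (i, j) h, if_pos h]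
        · simp
        · intro e he hne
          apply Matrix.single_apply_of_ne
          rintro ⟨rfl, rfl⟩
          exact hne rfl
      · rw [if_neg h]
        apply Finset.sum_eq_zero
        intro e he
        apply Matrix.single_apply_of_ne
        rintro ⟨rfl, rfl⟩
        exact h he
    -- columns of B indexed by matching edges are standard basis vectors
    have hcol : ∀ e : M, Bᵀ (e : Fin m × Fin n).2 = Pi.single (e : Fin m × Fin n).1 (1 : F) := by
      rintro ⟨e, he⟩
      funext i
      simp only [Matrix.transpose_apply, hBij]
      by_cases h : i = e.1
      · subst h
        rw [if_pos (by rwa [Prod.mk.eta]), Pi.single_eq_same]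
      · rw [Pi.single_eq_of_ne h]
        rw [if_neg]
        intro hmem
        by_cases heq : (i, e.2) = e
        · exact h (congrArg Prod.fst heq)
        · exact (hMm _ hmem _ he heq).2 rfl
    have hfst : Function.Injective (fun e : M => (e : Fin m × Fin n).1) := by
      rintro ⟨e, he⟩ ⟨f', hf'⟩ h
      simp only at h
      ext : 1
      by_contra hne
      exact (hMm e he f' hf' (by simpa using hne)).1 h
    have hli : LinearIndependent F (fun e : M => Bᵀ (e : Fin m × Fin n).2) := by
      have h1 := (Pi.basisFun F (Fin m)).linearIndependent.comp
        (fun e : M => (e : Fin m × Fin n).1) hfst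
      have heq : (fun e : M => Bᵀ (e : Fin m × Fin n).2)
          = (Pi.basisFun F (Fin m)) ∘ (fun e : M => (e : Fin m × Fin n).1) := by
        funext e
        rw [hcol e]
        simp [Function.comp]
      rw [heq]
      exact h1
    have hrange : Set.range (fun e : M => Bᵀ (e : Fin m × Fin n).2) ⊆ Set.range Bᵀ := by
      rintro v ⟨e, rfl⟩; exact ⟨_, rfl⟩
    have hcard : M.card ≤ B.rank := by
      rw [Matrix.rank_eq_finrank_span_cols]
      calc M.card = Module.finrank F (Submodule.span F
            (Set.range (fun e : M => Bᵀ (e : Fin m × Fin n).2))) := by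
              rw [finrank_span_eq_card hli, Fintype.card_coe]
        _ ≤ Module.finrank F (Submodule.span F (Set.range Bᵀ)) :=
            Submodule.finrank_mono (Submodule.span_mono hrange)
    exact hcard.trans (hB B hBmem)
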